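/- The product of pseudo-differential operators defined by the generalized Leibniz rule AB = Σ_k Σ_j Σ_{l≥0} C(k,l) f_k (∂^l g_j) ∂^{k+j-l} is associative. -/

import Mathlib

/-- Generalized binomial coefficient `C(k,l) = k(k-1)⋯(k-l+1)/l!` for `k : ℤ`. -/
noncomputable def genBinom (k : ℤ) (l : ℕ) : ℚ :=
  (∏ i ∈ Finset.range l, ((k : ℚ) - (i : ℚ))) / (Nat.factorial l : ℚ)

/-- Product of pseudo-differential operators, given by coefficient sequences
`A, B : ℤ → R` over a differential ring `(R, d)`, determined by the generalized
Leibniz rule: `(AB)_m = Σ_k Σ_l C(k,l) A_k d^l B_{m-k+l}`. -/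
noncomputable def pdoMul {R : Type*} [CommRing R] [Algebra ℚ R] (d : R → R)
    (A B : ℤ → R) : ℤ → R :=
  fun m => ∑ᶠ (k : ℤ) (l : ℕ), genBinom k l • (A k * d^[l] (B (m - k + l)))

theorem pdo_genBinom_eq_choose (k : ℤ) (l : ℕ) : genBinom k l = Ring.choose (k : ℚ) l := by
  have h : (∏ i ∈ Finset.range l, ((k : ℚ) - (i : ℚ))) = (descPochhammer ℤ l).smeval (k : ℚ) := by
    induction l with
    | zero => simp [descPochhammer_zero, Polynomial.smeval_one]
    | succ n ih =>
      rw [Finset.prod_range_succ, ih, descPochhammer_succ_right, Polynomial.smeval_mul,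
        Polynomial.smeval_sub, Polynomial.smeval_X, Polynomial.smeval_natCast]
      ring
  rw [genBinom, h, Ring.descPochhammer_eq_factorial_smul_choose, nsmul_eq_mul]
  field_simp [Nat.factorial_ne_zero]

theorem pdo_genBinom_mul (k j : ℤ) (p q : ℕ) :
    genBinom k p * genBinom (k + j - p) q =
      ∑ ij ∈ Finset.HasAntidiagonal.antidiagonal q,
        genBinom k (p + ij.1) * ((p + ij.1).choose p : ℚ) * genBinom j ij.2 := by
  simp only [pdo_genBinom_eq_choose]
  have hcast : ((k + j - (p:ℕ) : ℤ) : ℚ) = ((k:ℚ) - p) + (j : ℚ) := by push_cast; ring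
  rw [hcast, Ring.add_choose_eq q (Commute.all _ _), Finset.mul_sum]
  refine Finset.sum_congr rfl fun ij hij => ?_
  have h := Ring.choose_smul_choose (R := ℚ) (k : ℚ) (n := p + ij.1) (k := p) (Nat.le_add_right p ij.1)
  rw [Nat.add_sub_cancel_left] at h
  rw [← mul_assoc, ← h, nsmul_eq_mul]
  ring

section DerivLemmas

variable {R : Type*} [CommRing R] [Algebra ℚ R] (d : Derivation ℚ R R)

theorem pdo_iter_zero (l : ℕ) : (⇑d)^[l] 0 = 0 := by
  induction l with
  | zero => rfl
  | succ n ih => rw [Function.iterate_succ_apply', ih, map_zero]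

theorem pdo_iter_add (l : ℕ) (x y : R) : (⇑d)^[l] (x + y) = (⇑d)^[l] x + (⇑d)^[l] y := by
  induction l generalizing x y with
  | zero => rfl
  | succ n ih => rw [Function.iterate_succ_apply', Function.iterate_succ_apply',
      Function.iterate_succ_apply', ih, map_add]

theorem pdo_iter_smul (l : ℕ) (a : ℚ) (x : R) : (⇑d)^[l] (a • x) = a • (⇑d)^[l] x := by
  induction l generalizing x with
  | zero => rfl
  | succ n ih => rw [Function.iterate_succ_apply', Function.iterate_succ_apply', ih,
      Derivation.map_smul]

theorem pdo_iter_sum {ι : Type*} (s : Finset ι) (f : ι → R) (l : ℕ) :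
    (⇑d)^[l] (∑ i ∈ s, f i) = ∑ i ∈ s, (⇑d)^[l] (f i) := by
  classical
  induction s using Finset.induction with
  | empty => simp [pdo_iter_zero]
  | insert _ _ h ih => rw [Finset.sum_insert h, Finset.sum_insert h, pdo_iter_add, ih]

theorem pdo_iter_leibniz (l : ℕ) (x y : R) :
    (⇑d)^[l] (x * y) = ∑ p ∈ Finset.range (l + 1),
      (l.choose p : ℚ) • ((⇑d)^[p] x * (⇑d)^[l - p] y) := by
  induction l generalizing x y with
  | zero => simp
  | succ n ih =>
    rw [Function.iterate_succ_apply', ih, map_sum]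
    set F : ℕ → R := fun p => ((⇑d)^[p] x * (⇑d)^[n + 1 - p] y) with hF
    have hterm : ∀ p ∈ Finset.range (n + 1),
        (⇑d) ((n.choose p : ℚ) • ((⇑d)^[p] x * (⇑d)^[n - p] y)) =
        (n.choose p : ℚ) • F (p + 1) + (n.choose p : ℚ) • F p := by
      intro p hp
      have hp' := Finset.mem_range.mp hp
      have h1 : n + 1 - (p + 1) = n - p := by omega
      have h2 : n + 1 - p = n - p + 1 := by omega
      rw [Derivation.map_smul, Derivation.leibniz, smul_add, hF]
      simp only [h1, h2, Function.iterate_succ_apply', smul_eq_mul]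
      rw [mul_comm ((⇑d)^[n - p] y) (d ((⇑d)^[p] x))]
      exact add_comm _ _
    rw [Finset.sum_congr rfl hterm, Finset.sum_add_distrib]
    have h2 : ∑ p ∈ Finset.range (n + 1), (n.choose p : ℚ) • F p
        = ∑ p ∈ Finset.range (n + 1), (n.choose (p+1) : ℚ) • F (p+1)
          + (n.choose 0 : ℚ) • F 0 := by
      rw [← Finset.sum_range_succ' (fun p => (n.choose p : ℚ) • F p) (n+1),
        Finset.sum_range_succ (fun p => (n.choose p : ℚ) • F p) (n+1)]
      simp
    rw [h2, Finset.sum_range_succ' (fun p => ((n+1).choose p : ℚ) • F p) (n+1)]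
    simp only [Nat.choose_succ_succ, Nat.cast_add, add_smul, Finset.sum_add_distrib]
    simp [add_assoc]

theorem pdoMul_eq_sum (A B : ℤ → R) {mA mB : ℤ}
    (hA : ∀ k : ℤ, mA < k → A k = 0) (hB : ∀ k : ℤ, mB < k → B k = 0)
    (m : ℤ) (s : Finset ℤ) (t : Finset ℕ)
    (hs : ∀ k : ℤ, m - mB ≤ k → k ≤ mA → k ∈ s)
    (ht : ∀ l : ℕ, (l : ℤ) ≤ mA + mB - m → l ∈ t) :
    pdoMul (⇑d) A B m = ∑ k ∈ s, ∑ l ∈ t, genBinom k l • (A k * (⇑d)^[l] (B (m - k + l))) := by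
  have hterm : ∀ (k : ℤ) (l : ℕ), ¬(k ≤ mA ∧ m - k + l ≤ mB) →
      genBinom k l • (A k * (⇑d)^[l] (B (m - k + l))) = 0 := by
    intro k l h
    by_cases hk : k ≤ mA
    · have : B (m - k + l) = 0 := hB _ (by push_neg at h; exact h hk)
      rw [this, pdo_iter_zero, mul_zero, smul_zero]
    · rw [hA k (by omega), zero_mul, smul_zero]
  unfold pdoMul
  have hinner : ∀ k : ℤ, ∑ᶠ (l : ℕ), genBinom k l • (A k * (⇑d)^[l] (B (m - k + l)))
      = ∑ l ∈ t, genBinom k l • (A k * (⇑d)^[l] (B (m - k + l))) := by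
    intro k
    apply finsum_eq_sum_of_support_subset
    intro l hl
    simp only [Function.mem_support] at hl
    by_contra hlt
    have h1 : k ≤ mA ∧ m - k + l ≤ mB := by
      by_contra hc; exact hl (hterm k l hc)
    exact hlt (ht l (by omega))
  rw [finsum_congr hinner]
  apply finsum_eq_sum_of_support_subset
  intro k hk
  simp only [Function.mem_support] at hk
  by_contra hks
  apply hk
  apply Finset.sum_eq_zero
  intro l _
  apply hterm
  intro ⟨h1, h2⟩
  exact hks (hs k (by omega) h1)

theorem pdoMul_bound (A B : ℤ → R) {mA mB : ℤ}
    (hA : ∀ k : ℤ, mA < k → A k = 0) (hB : ∀ k : ℤ, mB < k → B k = 0) :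
    ∀ w : ℤ, mA + mB < w → pdoMul (⇑d) A B w = 0 := by
  intro w hw
  unfold pdoMul
  have : ∀ k : ℤ, ∀ l : ℕ, genBinom k l • (A k * (⇑d)^[l] (B (w - k + l))) = 0 := by
    intro k l
    by_cases hk : k ≤ mA
    · rw [hB _ (by omega), pdo_iter_zero, mul_zero, smul_zero]
    · rw [hA k (by omega), zero_mul, smul_zero]
  simp only [this, finsum_zero]

end DerivLemmas

section SumLemmas

variable {M : Type*} [AddCommMonoid M]

theorem pdo_sum_shift (f : ℤ → M) (a b c : ℤ) :
    ∑ k ∈ Finset.Icc a b, f k = ∑ j ∈ Finset.Icc (a - c) (b - c), f (j + c) := by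
  have h : Finset.Icc a b = Finset.map (addRightEmbedding c) (Finset.Icc (a - c) (b - c)) := by
    rw [Finset.map_add_right_Icc]
    congr 1 <;> omega
  rw [h, Finset.sum_map]
  rfl

theorem pdo_sum_change {ι : Type*} [DecidableEq ι] (f : ι → M) (s u : Finset ι)
    (hs : ∀ j ∉ s, f j = 0) (hu : ∀ j ∉ u, f j = 0) :
    ∑ j ∈ s, f j = ∑ j ∈ u, f j := by
  rw [Finset.sum_subset (Finset.subset_union_left (s₂ := u)) (fun x _ hx => hs x hx),
    Finset.sum_subset (Finset.subset_union_right (s₁ := s)) (fun x _ hx => hu x hx)]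

theorem pdo_tri1 (N : ℕ) (h : ℕ → ℕ → M)
    (hz : ∀ l p, p ≤ l → N ≤ l → h l p = 0)
    (hz2 : ∀ l p, l < p → h l p = 0) :
    ∑ l ∈ Finset.range N, ∑ p ∈ Finset.range (l + 1), h l p
      = ∑ p ∈ Finset.range N, ∑ i ∈ Finset.range N, h (p + i) p := by
  have step1 : ∀ l ∈ Finset.range N, ∑ p ∈ Finset.range (l + 1), h l p
      = ∑ p ∈ Finset.range N, h l p := by
    intro l hl
    apply Finset.sum_subset
    · intro p hp
      simp only [Finset.mem_range] at *
      omega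
    · intro p _ hp
      exact hz2 l p (by simp only [Finset.mem_range] at hp; omega)
  rw [Finset.sum_congr rfl step1, Finset.sum_comm]
  refine Finset.sum_congr rfl fun p hp => ?_
  have hpN := Finset.mem_range.mp hp
  have step2 : ∑ l ∈ Finset.range N, h l p = ∑ l ∈ Finset.Ico p N, h l p := by
    symm
    apply Finset.sum_subset
    · intro l hl
      simp only [Finset.mem_Ico, Finset.mem_range] at *
      omega
    · intro l hl1 hl2
      have h1 := Finset.mem_range.mp hl1
      rw [Finset.mem_Ico] at hl2
      exact hz2 l p (by omega)
  rw [step2, Finset.sum_Ico_eq_sum_range]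
  apply Finset.sum_subset
  · intro i hi
    simp only [Finset.mem_range] at *
    omega
  · intro i _ hi
    exact hz (p + i) p (Nat.le_add_right p i)
      (by simp only [Finset.mem_range] at hi; omega)

theorem pdo_tri2 (N : ℕ) (g : ℕ → ℕ → M) (hz : ∀ i n, N ≤ i + n → g i n = 0) :
    ∑ i ∈ Finset.range N, ∑ n ∈ Finset.range N, g i n
      = ∑ q ∈ Finset.range N, ∑ ij ∈ Finset.HasAntidiagonal.antidiagonal q, g ij.1 ij.2 := by
  classical
  have hdisj : Set.PairwiseDisjoint ↑(Finset.range N)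
      (Finset.HasAntidiagonal.antidiagonal : ℕ → Finset (ℕ × ℕ)) := by
    intro a _ b _ hab
    simp only [Finset.disjoint_left]
    intro ij h1 h2
    rw [Finset.HasAntidiagonal.mem_antidiagonal] at h1 h2
    exact hab (h1 ▸ h2.symm ▸ rfl)
  rw [← Finset.sum_biUnion hdisj]
  have hset : (Finset.range N).biUnion Finset.HasAntidiagonal.antidiagonal
      = (Finset.range N ×ˢ Finset.range N).filter (fun x => x.1 + x.2 < N) := by
    ext ⟨i, n⟩
    simp only [Finset.mem_biUnion, Finset.mem_range, Finset.HasAntidiagonal.mem_antidiagonal,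
      Finset.mem_filter, Finset.mem_product]
    constructor
    · rintro ⟨q, hq, rfl⟩; omega
    · rintro ⟨⟨h1, h2⟩, h3⟩; exact ⟨i + n, h3, rfl⟩
  rw [hset, ← Finset.sum_product']
  symm
  apply Finset.sum_subset (Finset.filter_subset _ _)
  intro ij hij hij2
  simp only [Finset.mem_filter, Finset.mem_product] at hij2
  apply hz
  by_contra hc
  exact hij2 ⟨Finset.mem_product.mp hij, by omega⟩

end SumLemmas
/-- the product of pseudo-differential operators
(formal series `Σ_{k≤m} f_k ∂^k`) defined by the generalized Leibniz rule is
associative. -/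
theorem pdoMul_assoc
    {R : Type*} [CommRing R] [Algebra ℚ R] (d : Derivation ℚ R R)
    (A B C : ℤ → R) (m₁ m₂ m₃ : ℤ)
    (hA : ∀ k : ℤ, m₁ < k → A k = 0) (hB : ∀ k : ℤ, m₂ < k → B k = 0)
    (hC : ∀ k : ℤ, m₃ < k → C k = 0) :
    pdoMul (⇑d) (pdoMul (⇑d) A B) C = pdoMul (⇑d) A (pdoMul (⇑d) B C) := by
  funext m
  have hAB := pdoMul_bound d A B hA hB
  have hBC := pdoMul_bound d B C hB hC
  set N : ℕ := (m₁ + m₂ + m₃ - m).toNat + 1 with hN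
  have hNE : m₁ + m₂ + m₃ - m < (N : ℤ) := by
    have := Int.self_le_toNat (m₁ + m₂ + m₃ - m)
    omega
  rw [pdoMul_eq_sum d (pdoMul ⇑d A B) C hAB hC m (Finset.Icc (m - m₃) (m₁ + m₂))
      (Finset.range N)
      (fun k h1 h2 => Finset.mem_Icc.mpr ⟨h1, h2⟩)
      (fun l hl => Finset.mem_range.mpr (by omega)),
    pdoMul_eq_sum d A (pdoMul ⇑d B C) hA hBC m (Finset.Icc (m - m₂ - m₃) m₁)
      (Finset.range N)
      (fun k h1 h2 => Finset.mem_Icc.mpr ⟨by omega, h2⟩)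
      (fun l hl => Finset.mem_range.mpr (by omega))]
  have hL : ∑ k' ∈ Finset.Icc (m - m₃) (m₁ + m₂), ∑ l' ∈ Finset.range N,
        genBinom k' l' • (pdoMul (⇑d) A B k' * (⇑d)^[l'] (C (m - k' + l')))
      = ∑ k ∈ Finset.Icc (m - m₂ - m₃) m₁, ∑ j ∈ Finset.Icc (m - m₁ - m₃) m₂,
          ∑ p ∈ Finset.range N, ∑ q ∈ Finset.range N,
          (genBinom k p * genBinom (k + j - p) q) •
            (A k * ((⇑d)^[p] (B j) * (⇑d)^[q] (C (m - k - j + (p + q))))) := by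
    calc
      ∑ k' ∈ Finset.Icc (m - m₃) (m₁ + m₂), ∑ l' ∈ Finset.range N,
          genBinom k' l' • (pdoMul (⇑d) A B k' * (⇑d)^[l'] (C (m - k' + l')))
        = ∑ k' ∈ Finset.Icc (m - m₃) (m₁ + m₂), ∑ l' ∈ Finset.range N,
            genBinom k' l' • ((∑ k ∈ Finset.Icc (m - m₂ - m₃) m₁, ∑ l ∈ Finset.range N,
              genBinom k l • (A k * (⇑d)^[l] (B (k' - k + l)))) *
              (⇑d)^[l'] (C (m - k' + l'))) := by
          refine Finset.sum_congr rfl fun k' hk' => ?_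
          obtain ⟨hk1, hk2⟩ := Finset.mem_Icc.mp hk'
          refine Finset.sum_congr rfl fun l' _ => ?_
          rw [pdoMul_eq_sum d A B hA hB k' (Finset.Icc (m - m₂ - m₃) m₁) (Finset.range N)
            (fun k h1 h2 => Finset.mem_Icc.mpr ⟨by omega, h2⟩)
            (fun l hl => Finset.mem_range.mpr (by omega))]
      _ = ∑ k' ∈ Finset.Icc (m - m₃) (m₁ + m₂), ∑ l' ∈ Finset.range N,
            ∑ k ∈ Finset.Icc (m - m₂ - m₃) m₁, ∑ l ∈ Finset.range N,
            (genBinom k' l' * genBinom k l) •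
              (A k * (⇑d)^[l] (B (k' - k + l)) * (⇑d)^[l'] (C (m - k' + l'))) := by
          simp only [Finset.sum_mul, smul_mul_assoc, Finset.smul_sum, smul_smul]
      _ = ∑ k ∈ Finset.Icc (m - m₂ - m₃) m₁, ∑ l ∈ Finset.range N,
            ∑ l' ∈ Finset.range N, ∑ k' ∈ Finset.Icc (m - m₃) (m₁ + m₂),
            (genBinom k' l' * genBinom k l) •
              (A k * (⇑d)^[l] (B (k' - k + l)) * (⇑d)^[l'] (C (m - k' + l'))) := by
          conv_lhs => enter [2, k']; rw [Finset.sum_comm]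
          rw [Finset.sum_comm]
          conv_lhs => enter [2, k]; rw [Finset.sum_comm]
          conv_lhs => enter [2, k, 2, l']; rw [Finset.sum_comm]
          conv_lhs => enter [2, k]; rw [Finset.sum_comm]
      _ = ∑ k ∈ Finset.Icc (m - m₂ - m₃) m₁, ∑ l ∈ Finset.range N,
            ∑ l' ∈ Finset.range N, ∑ j ∈ Finset.Icc (m - m₁ - m₃) m₂,
            (genBinom (j + (k - l)) l' * genBinom k l) •
              (A k * (⇑d)^[l] (B (j + (k - l) - k + l)) *
                (⇑d)^[l'] (C (m - (j + (k - l)) + l'))) := by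
          refine Finset.sum_congr rfl fun k _ => Finset.sum_congr rfl fun l _ =>
            Finset.sum_congr rfl fun l' _ => ?_
          rw [pdo_sum_shift (fun k' => (genBinom k' l' * genBinom k l) •
              (A k * (⇑d)^[l] (B (k' - k + l)) * (⇑d)^[l'] (C (m - k' + l'))))
            (m - m₃) (m₁ + m₂) (k - (l : ℤ))]
          apply pdo_sum_change
          · intro j hj
            rw [Finset.mem_Icc] at hj
            push_neg at hj
            have harg : j + (k - (l : ℤ)) - k + l = j := by ring
            rw [harg]
            by_cases hAk : A k = 0
            · rw [hAk, zero_mul, zero_mul, smul_zero]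
            by_cases hBj : B j = 0
            · rw [hBj, pdo_iter_zero, mul_zero, zero_mul, smul_zero]
            have hk1 : k ≤ m₁ := le_of_not_gt fun h => hAk (hA k h)
            have hj1 : j ≤ m₂ := le_of_not_gt fun h => hBj (hB j h)
            rcases lt_or_ge j (m - m₃ - (k - (l : ℤ))) with hj2 | hj2
            · rw [hC _ (by omega), pdo_iter_zero, mul_zero, smul_zero]
            · have hj3 := hj hj2
              exfalso; omega
          · intro j hj
            rw [Finset.mem_Icc] at hj
            push_neg at hj
            have harg : j + (k - (l : ℤ)) - k + l = j := by ring
            rw [harg]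
            by_cases hAk : A k = 0
            · rw [hAk, zero_mul, zero_mul, smul_zero]
            by_cases hBj : B j = 0
            · rw [hBj, pdo_iter_zero, mul_zero, zero_mul, smul_zero]
            have hk1 : k ≤ m₁ := le_of_not_gt fun h => hAk (hA k h)
            have hj1 : j ≤ m₂ := le_of_not_gt fun h => hBj (hB j h)
            rcases le_or_gt (m - m₁ - m₃) j with hj2 | hj2
            · have hj3 := hj hj2
              exfalso; omega
            · rw [hC _ (by omega), pdo_iter_zero, mul_zero, smul_zero]
      _ = ∑ k ∈ Finset.Icc (m - m₂ - m₃) m₁, ∑ j ∈ Finset.Icc (m - m₁ - m₃) m₂,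
            ∑ p ∈ Finset.range N, ∑ q ∈ Finset.range N,
            (genBinom k p * genBinom (k + j - p) q) •
              (A k * ((⇑d)^[p] (B j) * (⇑d)^[q] (C (m - k - j + (p + q))))) := by
          conv_lhs => enter [2, k, 2, l]; rw [Finset.sum_comm]
          conv_lhs => enter [2, k]; rw [Finset.sum_comm]
          refine Finset.sum_congr rfl fun k _ => Finset.sum_congr rfl fun j _ =>
            Finset.sum_congr rfl fun p _ => Finset.sum_congr rfl fun q _ => ?_
          have e2 : j + (k - (p : ℤ)) - k + p = j := by ring
          have e3 : m - (j + (k - (p : ℤ))) + q = m - k - j + ((p : ℤ) + q) := by ring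
          have e1 : j + (k - (p : ℤ)) = k + j - p := by ring
          rw [e2, e3, e1, mul_comm (genBinom (k + j - (p : ℤ)) q), mul_assoc]
  have hR : ∑ k ∈ Finset.Icc (m - m₂ - m₃) m₁, ∑ l ∈ Finset.range N,
        genBinom k l • (A k * (⇑d)^[l] (pdoMul (⇑d) B C (m - k + l)))
      = ∑ k ∈ Finset.Icc (m - m₂ - m₃) m₁, ∑ j ∈ Finset.Icc (m - m₁ - m₃) m₂,
          ∑ p ∈ Finset.range N, ∑ q ∈ Finset.range N,
          (genBinom k p * genBinom (k + j - p) q) •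
            (A k * ((⇑d)^[p] (B j) * (⇑d)^[q] (C (m - k - j + (p + q))))) := by
    calc
      ∑ k ∈ Finset.Icc (m - m₂ - m₃) m₁, ∑ l ∈ Finset.range N,
          genBinom k l • (A k * (⇑d)^[l] (pdoMul (⇑d) B C (m - k + l)))
        = ∑ k ∈ Finset.Icc (m - m₂ - m₃) m₁, ∑ l ∈ Finset.range N,
            ∑ j ∈ Finset.Icc (m - m₁ - m₃) m₂, ∑ n ∈ Finset.range N,
            ∑ p ∈ Finset.range (l + 1),
            (genBinom k l * (genBinom j n * (l.choose p : ℚ))) •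
              (A k * ((⇑d)^[p] (B j) *
                (⇑d)^[(l - p) + n] (C (m - k + l - j + n)))) := by
          refine Finset.sum_congr rfl fun k hk => ?_
          obtain ⟨hk1, hk2⟩ := Finset.mem_Icc.mp hk
          refine Finset.sum_congr rfl fun l _ => ?_
          rw [pdoMul_eq_sum d B C hB hC (m - k + (l : ℤ))
            (Finset.Icc (m - m₁ - m₃) m₂) (Finset.range N)
            (fun j h1 h2 => Finset.mem_Icc.mpr ⟨by omega, h2⟩)
            (fun n hn => Finset.mem_range.mpr (by omega))]
          have hpush : (⇑d)^[l] (∑ j ∈ Finset.Icc (m - m₁ - m₃) m₂, ∑ n ∈ Finset.range N,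
                genBinom j n • (B j * (⇑d)^[n] (C (m - k + l - j + n))))
              = ∑ j ∈ Finset.Icc (m - m₁ - m₃) m₂, ∑ n ∈ Finset.range N,
                ∑ p ∈ Finset.range (l + 1),
                (genBinom j n * (l.choose p : ℚ)) •
                  ((⇑d)^[p] (B j) * (⇑d)^[(l - p) + n] (C (m - k + l - j + n))) := by
            rw [pdo_iter_sum d]
            refine Finset.sum_congr rfl fun j _ => ?_
            rw [pdo_iter_sum d]
            refine Finset.sum_congr rfl fun n _ => ?_
            rw [pdo_iter_smul d, pdo_iter_leibniz d, Finset.smul_sum]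
            refine Finset.sum_congr rfl fun p _ => ?_
            rw [smul_smul, ← Function.iterate_add_apply]
          rw [hpush]
          simp only [Finset.mul_sum, Finset.smul_sum, mul_smul_comm, smul_smul]
      _ = ∑ k ∈ Finset.Icc (m - m₂ - m₃) m₁, ∑ j ∈ Finset.Icc (m - m₁ - m₃) m₂,
            ∑ l ∈ Finset.range N, ∑ p ∈ Finset.range (l + 1), ∑ n ∈ Finset.range N,
            (genBinom k l * (genBinom j n * (l.choose p : ℚ))) •
              (A k * ((⇑d)^[p] (B j) *
                (⇑d)^[(l - p) + n] (C (m - k + l - j + n)))) := by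
          conv_lhs => enter [2, k]; rw [Finset.sum_comm]
          conv_lhs => enter [2, k, 2, j, 2, l]; rw [Finset.sum_comm]
      _ = ∑ k ∈ Finset.Icc (m - m₂ - m₃) m₁, ∑ j ∈ Finset.Icc (m - m₁ - m₃) m₂,
            ∑ p ∈ Finset.range N, ∑ i ∈ Finset.range N, ∑ n ∈ Finset.range N,
            (genBinom k (p + i) * (genBinom j n * ((p + i).choose p : ℚ))) •
              (A k * ((⇑d)^[p] (B j) *
                (⇑d)^[i + n] (C (m - k + (↑(p + i) : ℤ) - j + n)))) := by
          refine Finset.sum_congr rfl fun k _ => Finset.sum_congr rfl fun j _ => ?_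
          rw [pdo_tri1 N (fun l p => ∑ n ∈ Finset.range N,
              (genBinom k l * (genBinom j n * (l.choose p : ℚ))) •
                (A k * ((⇑d)^[p] (B j) *
                  (⇑d)^[(l - p) + n] (C (m - k + l - j + n)))))
            (by
              intro l p hpl hNl
              apply Finset.sum_eq_zero
              intro n _
              by_cases hAk : A k = 0
              · rw [hAk, zero_mul, smul_zero]
              by_cases hBj : B j = 0
              · rw [hBj, pdo_iter_zero, zero_mul, mul_zero, smul_zero]
              have hk1 : k ≤ m₁ := le_of_not_gt fun h => hAk (hA k h)
              have hj1 : j ≤ m₂ := le_of_not_gt fun h => hBj (hB j h)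
              rw [hC _ (by omega), pdo_iter_zero, mul_zero, mul_zero, smul_zero])
            (by
              intro l p hlp
              apply Finset.sum_eq_zero
              intro n _
              rw [Nat.choose_eq_zero_of_lt hlp]
              simp)]
          simp only [Nat.add_sub_cancel_left]
      _ = ∑ k ∈ Finset.Icc (m - m₂ - m₃) m₁, ∑ j ∈ Finset.Icc (m - m₁ - m₃) m₂,
            ∑ p ∈ Finset.range N, ∑ q ∈ Finset.range N, ∑ ij ∈ Finset.HasAntidiagonal.antidiagonal q,
            (genBinom k (p + ij.1) * (genBinom j ij.2 * ((p + ij.1).choose p : ℚ))) •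
              (A k * ((⇑d)^[p] (B j) *
                (⇑d)^[ij.1 + ij.2] (C (m - k + (↑(p + ij.1) : ℤ) - j + ij.2)))) := by
          refine Finset.sum_congr rfl fun k _ => Finset.sum_congr rfl fun j _ =>
            Finset.sum_congr rfl fun p _ => ?_
          rw [pdo_tri2 N (fun i n =>
              (genBinom k (p + i) * (genBinom j n * ((p + i).choose p : ℚ))) •
                (A k * ((⇑d)^[p] (B j) *
                  (⇑d)^[i + n] (C (m - k + (↑(p + i) : ℤ) - j + n)))))
            (by
              intro i n hin
              by_cases hAk : A k = 0
              · rw [hAk, zero_mul, smul_zero]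
              by_cases hBj : B j = 0
              · rw [hBj, pdo_iter_zero, zero_mul, mul_zero, smul_zero]
              have hk1 : k ≤ m₁ := le_of_not_gt fun h => hAk (hA k h)
              have hj1 : j ≤ m₂ := le_of_not_gt fun h => hBj (hB j h)
              rw [hC _ (by omega), pdo_iter_zero, mul_zero, mul_zero, smul_zero])]
      _ = ∑ k ∈ Finset.Icc (m - m₂ - m₃) m₁, ∑ j ∈ Finset.Icc (m - m₁ - m₃) m₂,
            ∑ p ∈ Finset.range N, ∑ q ∈ Finset.range N,
            (genBinom k p * genBinom (k + j - p) q) •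
              (A k * ((⇑d)^[p] (B j) * (⇑d)^[q] (C (m - k - j + (p + q))))) := by
          refine Finset.sum_congr rfl fun k _ => Finset.sum_congr rfl fun j _ =>
            Finset.sum_congr rfl fun p _ => Finset.sum_congr rfl fun q _ => ?_
          rw [pdo_genBinom_mul, Finset.sum_smul]
          refine Finset.sum_congr rfl fun ij hij => ?_
          have hq := Finset.HasAntidiagonal.mem_antidiagonal.mp hij
          have e2 : m - k + (↑(p + ij.1) : ℤ) - j + ij.2 = m - k - j + ((p : ℤ) + q) := by
            push_cast
            omega
          rw [e2, hq]
          congr 1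
          ring
  rw [hL]
  exact hR.symm
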